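/- Let d, e ∈ (0, 1], let α₁ = de²/((d − e)² + e²) and α₂ = de(d − e)/((d − e)² + e²), let a, b ∈ ℝ with a² + b² = 1 and a ≥ 0, and let ρ be a real number with 0 < ρ < 9 + 4√2. Then 1 + b² + (ρ − 1)·(a²α₁ + abα₂) > 0. -/

import Mathlib

set_option maxHeartbeats 1000000

/-- Positivity of the Case-2 local form: for `d, e ∈ (0, 1]`,
`α₁ = de²/((d-e)² + e²)`, `α₂ = de(d-e)/((d-e)² + e²)`, a unit vector `(a, b)` with
`a ≥ 0`, and any conductivity ratio `0 < ρ < 9 + 4√2`, one has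
`1 + b² + (ρ - 1)(a²α₁ + abα₂) > 0`. -/
theorem case_two_quadratic_form_positive
    (d e : ℝ) (hd : d ∈ Set.Ioc (0 : ℝ) 1) (he : e ∈ Set.Ioc (0 : ℝ) 1)
    (α₁ α₂ : ℝ)
    (hα₁ : α₁ = d * e ^ 2 / ((d - e) ^ 2 + e ^ 2))
    (hα₂ : α₂ = d * e * (d - e) / ((d - e) ^ 2 + e ^ 2))
    (a b : ℝ) (hab : a ^ 2 + b ^ 2 = 1) (ha : 0 ≤ a)
    (ρ : ℝ) (hρ₀ : 0 < ρ) (hρ₁ : ρ < 9 + 4 * Real.sqrt 2) :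
    0 < 1 + b ^ 2 + (ρ - 1) * (a ^ 2 * α₁ + a * b * α₂) := by
  obtain ⟨hd0, hd1⟩ := hd
  obtain ⟨he0, he1⟩ := he
  set r : ℝ := Real.sqrt 2 with hr
  have hr2 : r ^ 2 = 2 := Real.sq_sqrt (by norm_num)
  have hr1 : 1 ≤ r := by
    nlinarith [Real.sqrt_nonneg 2, hr2]
  have hS : 0 < (d - e) ^ 2 + e ^ 2 := by positivity
  have ha1 : a ≤ 1 := by nlinarith [sq_nonneg b]
  subst hα₁ hα₂
  have key : 1 + b ^ 2 + (ρ - 1) * (a ^ 2 * (d * e ^ 2 / ((d - e) ^ 2 + e ^ 2))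
      + a * b * (d * e * (d - e) / ((d - e) ^ 2 + e ^ 2)))
      = ((1 + b ^ 2) * ((d - e) ^ 2 + e ^ 2)
        + (ρ - 1) * (a * d * e * (a * e + b * (d - e)))) / ((d - e) ^ 2 + e ^ 2) := by
    rw [eq_div_iff hS.ne']
    have h1 : a ^ 2 * (d * e ^ 2 / ((d - e) ^ 2 + e ^ 2))
        = a ^ 2 * (d * e ^ 2) / ((d - e) ^ 2 + e ^ 2) := by ring
    have h2 : a * b * (d * e * (d - e) / ((d - e) ^ 2 + e ^ 2))
        = a * b * (d * e * (d - e)) / ((d - e) ^ 2 + e ^ 2) := by ring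
    rw [h1, h2, ← add_div, add_mul, add_mul, mul_assoc (ρ - 1),
      div_mul_cancel₀ _ hS.ne']
    ring
  rw [key]
  apply div_pos _ hS
  clear key
  rcases le_or_gt ρ 1 with hρ | hρ
  · -- ρ ≤ 1 : use X ≤ S
    have hCS : (a * e + b * (d - e)) ^ 2 ≤ (d - e) ^ 2 + e ^ 2 := by
      nlinarith [sq_nonneg (a * (d - e) - b * e)]
    have hX : a * d * e * (a * e + b * (d - e)) ≤ (d - e) ^ 2 + e ^ 2 := by
      rcases le_or_gt (a * e + b * (d - e)) 0 with hu | hu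
      · nlinarith [mul_nonneg (mul_nonneg ha hd0.le) he0.le]
      · have h1 : e * (a * e + b * (d - e)) ≤ (d - e) ^ 2 + e ^ 2 := by
          nlinarith [mul_pos he0 hu, sq_nonneg e]
        have had : a * d ≤ 1 := mul_le_one₀ ha1 hd0.le hd1
        have := mul_le_mul_of_nonneg_right had (mul_pos he0 hu).le
        nlinarith [this, h1]
    have p1 : 0 ≤ (1 - ρ) * (((d - e) ^ 2 + e ^ 2) - a * d * e * (a * e + b * (d - e))) :=
      mul_nonneg (by linarith) (by linarith)
    have p2 : 0 < ρ * ((d - e) ^ 2 + e ^ 2) := mul_pos hρ₀ hS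
    have p3 : 0 ≤ b ^ 2 * ((d - e) ^ 2 + e ^ 2) := mul_nonneg (sq_nonneg b) hS.le
    nlinarith [p1, p2, p3]
  · rcases le_or_gt 0 (a * d * e * (a * e + b * (d - e))) with hQ | hQ
    · have p1 : 0 ≤ (ρ - 1) * (a * d * e * (a * e + b * (d - e))) :=
        mul_nonneg (by linarith) hQ
      nlinarith [p1, mul_nonneg (sq_nonneg b) hS.le]
    · -- X < 0
      have hade : 0 ≤ a * d * e := by positivity
      have hu : a * e + b * (d - e) < 0 := by
        by_contra h
        push_neg at h
        exact absurd (mul_nonneg hade h) (not_le.mpr hQ)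
      have hF : 0 ≤ (1 - a) * (d - e) ^ 2 + (1 + a) * e ^ 2
          + 2 * b * e * (d - e) := by
        nlinarith [sq_nonneg (b * (d - e) + (1 + a) * e), sq_nonneg b]
      have h2 : e * (-(a * e) - b * (d - e)) ≤ (1 - a) * ((d - e) ^ 2 + e ^ 2) / 2 := by
        nlinarith [hF]
      have h3 : -(a * d * e * (a * e + b * (d - e)))
          ≤ a * ((1 - a) * ((d - e) ^ 2 + e ^ 2) / 2) := by
        have hnu : 0 < -(a * e) - b * (d - e) := by linarith
        have hd' : d * (e * (-(a * e) - b * (d - e))) ≤ e * (-(a * e) - b * (d - e)) := by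
          nlinarith [mul_pos he0 hnu]
        have := mul_le_mul_of_nonneg_left (le_trans hd' h2) ha
        nlinarith [this]
      have h4 : (4 + 2 * r) * (a * (1 - a)) ≤ 2 - a ^ 2 := by
        nlinarith [sq_nonneg (2 * (3 + 2 * r) * a - (4 + 2 * r)), hr2, hr1]
      have hnX : 0 < -(a * d * e * (a * e + b * (d - e))) := by linarith
      have h5 : (ρ - 1) * (-(a * d * e * (a * e + b * (d - e))))
          < (8 + 4 * r) * (-(a * d * e * (a * e + b * (d - e)))) := by
        apply mul_lt_mul_of_pos_right _ hnX
        linarith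
      have h6 : (8 + 4 * r) * (-(a * d * e * (a * e + b * (d - e))))
          ≤ (8 + 4 * r) * (a * ((1 - a) * ((d - e) ^ 2 + e ^ 2) / 2)) := by
        apply mul_le_mul_of_nonneg_left h3
        linarith
      have h7 : (8 + 4 * r) * (a * ((1 - a) * ((d - e) ^ 2 + e ^ 2) / 2))
          ≤ (2 - a ^ 2) * ((d - e) ^ 2 + e ^ 2) := by
        nlinarith [mul_le_mul_of_nonneg_right h4 hS.le]
      have hb : b ^ 2 = 1 - a ^ 2 := by linarith
      have hEq : (1 + b ^ 2) * ((d - e) ^ 2 + e ^ 2)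
          = (2 - a ^ 2) * ((d - e) ^ 2 + e ^ 2) := by rw [hb]; ring
      nlinarith [h5, h6, h7, hEq]
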